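/- arXiv:2401.00730 — 2 statements merged into one kernel-verified Lean document; each statement's English description precedes it below -/
import Mathlib

section
/- Let H be a finite-dimensional complex inner product space, A : H → H selfadjoint positive definite, B : H → H selfadjoint and injective, and let {φ_ℓ} be a basis with -Bφ_ℓ = λ_ℓ A φ_ℓ and (Aφ_ℓ, φ_{ℓ'}) = δ_{ℓℓ'}. Suppose all λ_ℓ have the same sign σ and let (ε, α) with ε ≥ 0, σ·Im α ≤ 0, ε + |α| > 0. Then iεA + αB : H → H is invertible, and there exists c > 1 (independent of ε, α) such that (1/c)‖v‖ ≤ √(ε² + |α|²) · ‖(iεA + αB)^{-1} v‖ ≤ c‖v‖ for all v ∈ H. -/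
open Complex

set_option maxHeartbeats 1000000

/-- With `A` selfadjoint positive definite, `B` selfadjoint
injective on a finite-dimensional complex Hilbert space `H`, and a basis `φ_ℓ`
with `-Bφ_ℓ = λ_ℓ Aφ_ℓ`, `(Aφ_ℓ, φ_ℓ') = δ_{ℓℓ'}`, all `λ_ℓ` of the same sign
`σ`: for `(ε, α)` with `ε ≥ 0`, `σ·Im α ≤ 0`, `ε + |α| > 0`, the operator
`iεA + αB` is bijective and there is `c > 1` (independent of `ε, α`) with
`(1/c)‖Lu‖ ≤ √(ε² + |α|²)·‖u‖ ≤ c‖Lu‖` for all `u` (equivalently, the stated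
two-sided bound for `v = Lu` and `(iεA + αB)⁻¹ v = u`). -/
theorem operator_inverse_bound
    {H : Type*} [NormedAddCommGroup H] [InnerProductSpace ℂ H]
    [FiniteDimensional ℂ H]
    (A B : H →ₗ[ℂ] H) (hA : A.IsSymmetric) (hB : B.IsSymmetric)
    (hApos : ∀ x : H, x ≠ 0 → 0 < (inner ℂ (A x) x : ℂ).re)
    (hBinj : Function.Injective B)
    (m : ℕ) (hm : 0 < m) (b : Module.Basis (Fin m) ℂ H) (lam : Fin m → ℝ)
    (heig : ∀ ℓ, -(B (b ℓ)) = (lam ℓ : ℂ) • A (b ℓ))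
    (hnorm : ∀ ℓ ℓ' : Fin m, (inner ℂ (A (b ℓ)) (b ℓ') : ℂ) = if ℓ = ℓ' then 1 else 0)
    (σ : ℝ) (hσ : σ = 1 ∨ σ = -1) (hsign : ∀ ℓ, 0 < σ * lam ℓ) :
    ∃ c > (1 : ℝ), ∀ (ε : ℝ) (α : ℂ), 0 ≤ ε → σ * α.im ≤ 0 →
      0 < ε + ‖α‖ →
      Function.Bijective (fun u : H => (Complex.I * ε) • A u + α • B u) ∧
      ∀ u : H,
        (1 / c) * ‖(Complex.I * ε) • A u + α • B u‖ ≤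
            Real.sqrt (ε ^ 2 + ‖α‖ ^ 2) * ‖u‖ ∧
          Real.sqrt (ε ^ 2 + ‖α‖ ^ 2) * ‖u‖ ≤
            c * ‖(Complex.I * ε) • A u + α • B u‖ := by
  haveI : ProperSpace H := FiniteDimensional.proper ℂ H
  have hAc : Continuous A := A.continuous_of_finiteDimensional
  have hBc : Continuous B := B.continuous_of_finiteDimensional
  -- expansion of the operator in the basis
  have hexpand : ∀ (ε : ℝ) (α : ℂ) (u : H),
      (Complex.I * ε) • A u + α • B u
        = ∑ ℓ, ((b.repr u ℓ) * (Complex.I * ε - α * lam ℓ)) • A (b ℓ) := by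
    intro ε α u
    conv_lhs => rw [← b.sum_repr u]
    rw [map_sum, map_sum, Finset.smul_sum, Finset.smul_sum, ← Finset.sum_add_distrib]
    refine Finset.sum_congr rfl fun ℓ _ => ?_
    have hBb : B (b ℓ) = -((lam ℓ : ℂ) • A (b ℓ)) := by rw [← heig ℓ, neg_neg]
    rw [map_smul, map_smul, hBb]
    module
  -- the eigenvalue factors are nonzero
  have hμ : ∀ (ε : ℝ) (α : ℂ), 0 ≤ ε → σ * α.im ≤ 0 → 0 < ε + ‖α‖ →
      ∀ ℓ, Complex.I * ε - α * lam ℓ ≠ 0 := by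
    intro ε α hε hIm hpos ℓ h
    rw [Complex.ext_iff] at h
    simp [Complex.mul_re, Complex.mul_im] at h
    obtain ⟨h1, h2⟩ := h
    have hlam : lam ℓ ≠ 0 := by
      intro hc
      have hs := hsign ℓ
      rw [hc, mul_zero] at hs
      exact lt_irrefl 0 hs
    have hre : α.re = 0 := h1.resolve_right hlam
    have him : α.im * lam ℓ ≤ 0 := by
      nlinarith [hIm, hsign ℓ, (by rcases hσ with rfl | rfl <;> norm_num : σ * σ = 1)]
    have hε0 : ε = 0 := by nlinarith
    have him0 : α.im = 0 := by rcases hσ with rfl | rfl <;> nlinarith [hsign ℓ]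
    have hα : α = 0 := by rw [Complex.ext_iff]; exact ⟨hre, him0⟩
    rw [hα, hε0] at hpos; simp at hpos
  -- injectivity
  have hinj : ∀ (ε : ℝ) (α : ℂ), 0 ≤ ε → σ * α.im ≤ 0 → 0 < ε + ‖α‖ →
      ∀ u : H, (Complex.I * ε) • A u + α • B u = 0 → u = 0 := by
    intro ε α hε hIm hpos u hu
    rw [hexpand ε α u] at hu
    have h1 : ∀ ℓ' : Fin m, b.repr u ℓ' = 0 := by
      intro ℓ'
      have h2 : (inner ℂ (∑ ℓ, ((b.repr u ℓ) * (Complex.I * ε - α * lam ℓ)) • A (b ℓ))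
          (b ℓ') : ℂ) = 0 := by rw [hu]; exact inner_zero_left _
      rw [sum_inner] at h2
      simp only [inner_smul_left, hnorm, mul_ite, mul_one, mul_zero,
        Finset.sum_ite_eq', Finset.mem_univ, if_true, map_mul] at h2
      rcases mul_eq_zero.mp h2 with h | h
      · rwa [map_eq_zero] at h
      · rw [map_eq_zero] at h; exact absurd h (hμ ε α hε hIm hpos ℓ')
    have hr0 : b.repr u = 0 := by ext ℓ; exact h1 ℓ
    exact (LinearEquiv.map_eq_zero_iff b.repr).mp hr0
  -- compact set of normalized parameters
  set S : Set ((ℝ × ℂ) × H) := {p | 0 ≤ p.1.1 ∧ σ * p.1.2.im ≤ 0 ∧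
    p.1.1 ^ 2 + ‖p.1.2‖ ^ 2 = 1 ∧ ‖p.2‖ = 1} with hS
  set F : ((ℝ × ℂ) × H) → ℝ := fun p =>
    ‖(Complex.I * p.1.1) • A p.2 + p.1.2 • B p.2‖ with hF
  have hFc : Continuous F := by
    apply Continuous.norm
    apply Continuous.add
    · exact (continuous_const.mul (Complex.continuous_ofReal.comp
        (continuous_fst.comp continuous_fst))).smul (hAc.comp continuous_snd)
    · exact (continuous_snd.comp continuous_fst).smul (hBc.comp continuous_snd)
  have hSclosed : IsClosed S := by
    apply IsClosed.inter
    · exact isClosed_le continuous_const (continuous_fst.comp continuous_fst)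
    · apply IsClosed.inter
      · exact isClosed_le ((continuous_const.mul (Complex.continuous_im.comp
          (continuous_snd.comp continuous_fst)))) continuous_const
      · apply IsClosed.inter
        · exact isClosed_eq (((continuous_fst.comp continuous_fst).pow 2).add
            ((continuous_norm.comp (continuous_snd.comp continuous_fst)).pow 2))
            continuous_const
        · exact isClosed_eq (continuous_snd.norm) continuous_const
  have hSbdd : Bornology.IsBounded S := by
    apply (Metric.isBounded_closedBall (x := (0 : (ℝ × ℂ) × H)) (r := 1)).subset
    rintro ⟨⟨ε, α⟩, u⟩ ⟨h1, h2, h3, h4⟩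
    simp only [Metric.mem_closedBall, dist_zero_right, Prod.norm_def]
    have hε : |ε| ≤ 1 := by
      rw [abs_le]; constructor <;> nlinarith [norm_nonneg α]
    have hα : ‖α‖ ≤ 1 := by nlinarith [norm_nonneg α]
    simp only [Real.norm_eq_abs]
    exact max_le (max_le hε hα) h4.le
  have hScompact : IsCompact S := Metric.isCompact_of_isClosed_isBounded hSclosed hSbdd
  have hSne : S.Nonempty := by
    refine ⟨⟨⟨0, -(σ : ℂ) * Complex.I⟩, (‖b ⟨0, hm⟩‖⁻¹ : ℝ) • b ⟨0, hm⟩⟩, ?_, ?_, ?_, ?_⟩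
    · exact le_refl 0
    · simp; exact mul_self_nonneg σ
    · simp; rcases hσ with rfl | rfl <;> norm_num
    · rw [norm_smul]
      have hb0 : b ⟨0, hm⟩ ≠ 0 := b.ne_zero _
      simp [norm_inv, inv_mul_cancel₀, norm_ne_zero_iff.mpr hb0]
  obtain ⟨pmin, hpminS, hmin⟩ := hScompact.exists_isMinOn hSne hFc.continuousOn
  obtain ⟨pmax, hpmaxS, hmax⟩ := hScompact.exists_isMaxOn hSne hFc.continuousOn
  set δ : ℝ := F pmin with hδdef
  set M : ℝ := F pmax with hMdef
  have hδpos : 0 < δ := by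
    obtain ⟨h1, h2, h3, h4⟩ := hpminS
    have hpos : 0 < pmin.1.1 + ‖pmin.1.2‖ := by
      nlinarith [norm_nonneg pmin.1.2]
    have hu0 : pmin.2 ≠ 0 := by intro h; rw [h] at h4; simp at h4
    have : (Complex.I * pmin.1.1) • A pmin.2 + pmin.1.2 • B pmin.2 ≠ 0 := by
      intro h; exact hu0 (hinj pmin.1.1 pmin.1.2 h1 h2 hpos pmin.2 h)
    exact norm_pos_iff.mpr this
  set c : ℝ := max (1 / δ) M + 1 with hcdef
  have hcM : M ≤ c := by
    have h := le_max_right (1 / δ) M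
    simp only [hcdef]; linarith
  have hcδ : 1 / δ ≤ c := by
    have h := le_max_left (1 / δ) M
    simp only [hcdef]; linarith
  have hc1 : 1 < c := by
    have h0 : 0 < 1 / δ := by positivity
    have h1 := le_max_left (1 / δ) M
    simp only [hcdef]; linarith
  refine ⟨c, hc1, ?_⟩
  intro ε α hε hIm hpos
  constructor
  · -- bijectivity
    have hinj' : Function.Injective
        ((Complex.I * ε) • A + α • B : H →ₗ[ℂ] H) := by
      rw [injective_iff_map_eq_zero]
      intro u hu
      exact hinj ε α hε hIm hpos u (by simpa using hu)
    have hbij : Function.Bijective ((Complex.I * ε) • A + α • B : H →ₗ[ℂ] H) :=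
      ⟨hinj', LinearMap.injective_iff_surjective.mp hinj'⟩
    have heq : (fun u : H => (Complex.I * ε) • A u + α • B u)
        = ⇑((Complex.I * ε) • A + α • B : H →ₗ[ℂ] H) := by
      funext u; simp
    rw [heq]; exact hbij
  · -- norm bounds
    intro u
    set r : ℝ := Real.sqrt (ε ^ 2 + ‖α‖ ^ 2) with hrdef
    have habs : 0 ≤ ‖α‖ := norm_nonneg α
    have hsum : 0 < ε ^ 2 + ‖α‖ ^ 2 := by
      nlinarith [mul_pos hpos hpos, sq_nonneg (ε - ‖α‖)]
    have hr : 0 < r := Real.sqrt_pos.mpr hsum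
    have hr2 : r ^ 2 = ε ^ 2 + ‖α‖ ^ 2 := Real.sq_sqrt hsum.le
    by_cases hu0 : u = 0
    · subst hu0
      simp
    · have hnu : 0 < ‖u‖ := norm_pos_iff.mpr hu0
      set p : (ℝ × ℂ) × H := ⟨⟨r⁻¹ * ε, ((r⁻¹ : ℝ) : ℂ) * α⟩,
        ((‖u‖⁻¹ : ℝ) : ℂ) • u⟩ with hpdef
      have hpS : p ∈ S := by
        refine ⟨?_, ?_, ?_, ?_⟩
        · exact mul_nonneg (inv_nonneg.mpr hr.le) hε
        · show σ * ((((r⁻¹ : ℝ) : ℂ)) * α).im ≤ 0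
          rw [Complex.im_ofReal_mul]
          calc σ * (r⁻¹ * α.im) = r⁻¹ * (σ * α.im) := by ring
          _ ≤ 0 := mul_nonpos_of_nonneg_of_nonpos (inv_nonneg.mpr hr.le) hIm
        · simp only [hpdef, norm_mul, Complex.norm_real, Real.norm_eq_abs]
          rw [_root_.abs_of_nonneg (inv_nonneg.mpr hr.le)]
          field_simp
          nlinarith
        · simp only [hpdef, norm_smul, Complex.norm_real, Real.norm_eq_abs]
          rw [_root_.abs_of_nonneg (inv_nonneg.mpr hnu.le)]
          field_simp
      have hFp : F p = r⁻¹ * (‖u‖⁻¹ * ‖(Complex.I * ε) • A u + α • B u‖) := by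
        have hvec : (Complex.I * ((r⁻¹ * ε : ℝ) : ℂ)) • A (((‖u‖⁻¹ : ℝ) : ℂ) • u)
            + (((r⁻¹ : ℝ) : ℂ) * α) • B (((‖u‖⁻¹ : ℝ) : ℂ) • u)
            = (((r⁻¹ : ℝ) : ℂ) * ((‖u‖⁻¹ : ℝ) : ℂ)) •
              ((Complex.I * ε) • A u + α • B u) := by
          rw [map_smul, map_smul]
          push_cast
          module
        simp only [hF, hpdef]
        rw [hvec, norm_smul, norm_mul]
        simp only [Complex.norm_real, Real.norm_eq_abs]
        rw [_root_.abs_of_nonneg (inv_nonneg.mpr hr.le),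
          _root_.abs_of_nonneg (inv_nonneg.mpr hnu.le), mul_assoc]
      have hlow : δ ≤ F p := isMinOn_iff.mp hmin p hpS
      have hhigh : F p ≤ M := isMaxOn_iff.mp hmax p hpS
      rw [hFp] at hlow hhigh
      set X : ℝ := ‖(Complex.I * ε) • A u + α • B u‖ with hXdef
      have hX0 : 0 ≤ X := norm_nonneg _
      have hq : 0 < r * ‖u‖ := mul_pos hr hnu
      have h1 : δ * (r * ‖u‖) ≤ X := by
        have := mul_le_mul_of_nonneg_left hlow hq.le
        calc δ * (r * ‖u‖) = (r * ‖u‖) * δ := by ring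
        _ ≤ (r * ‖u‖) * (r⁻¹ * (‖u‖⁻¹ * X)) := this
        _ = X := by field_simp
      have h2 : X ≤ M * (r * ‖u‖) := by
        have := mul_le_mul_of_nonneg_left hhigh hq.le
        calc X = (r * ‖u‖) * (r⁻¹ * (‖u‖⁻¹ * X)) := by field_simp
        _ ≤ (r * ‖u‖) * M := this
        _ = M * (r * ‖u‖) := by ring
      constructor
      · -- (1/c) * X ≤ r * ‖u‖
        rw [div_mul_eq_mul_div, div_le_iff₀ (by linarith)]
        calc 1 * X = X := one_mul X
        _ ≤ M * (r * ‖u‖) := h2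
        _ ≤ c * (r * ‖u‖) := mul_le_mul_of_nonneg_right hcM hq.le
        _ = r * ‖u‖ * c := by ring
      · -- r * ‖u‖ ≤ c * X
        have hδc : 1 ≤ δ * c := by
          rw [div_le_iff₀ hδpos] at hcδ
          linarith [hcδ]
        calc r * ‖u‖ = 1 * (r * ‖u‖) := (one_mul _).symm
        _ ≤ (δ * c) * (r * ‖u‖) := mul_le_mul_of_nonneg_right hδc hq.le
        _ = c * (δ * (r * ‖u‖)) := by ring
        _ ≤ c * X := mul_le_mul_of_nonneg_left h1 (by linarith)
end

section
/- Let ω > k > 0 and n > 1 satisfy nk² > ω². Define z = √(nk² - ω²) and suppose √(ω² - k²) sin z + z cos z = 0. Define φ(x₁, x₂) = e^{iω x₁} · sin(z x₂) for 0 < x₂ ≤ 1 and φ(x₁, x₂) = e^{iω x₁} · sin(z) · e^{-√(ω² - k²)(x₂ - 1)} for x₂ > 1. Then φ is C¹ across x₂ = 1 (i.e. φ and ∂₂φ are continuous there), φ(x₁, 0) = 0, Δφ + k² n φ = 0 for 0 < x₂ < 1, and Δφ + k² φ = 0 for x₂ > 1. -/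
open Complex Real Set Filter

noncomputable def Fm (ω z x₁ t : ℝ) : ℂ :=
  Complex.exp (Complex.I * ω * x₁) * ((Real.sin (z * t) : ℝ) : ℂ)

noncomputable def Gm (ω z a x₁ t : ℝ) : ℂ :=
  Complex.exp (Complex.I * ω * x₁) * ((Real.sin z : ℝ) : ℂ) *
    Complex.exp (-(a : ℂ) * ((t : ℂ) - 1))

lemma Fm_hasDerivAt (ω z x₁ t : ℝ) :
    HasDerivAt (Fm ω z x₁)
      (Complex.exp (Complex.I * ω * x₁) * ((z * Real.cos (z * t) : ℝ) : ℂ)) t := by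
  have h1 : HasDerivAt (fun t : ℝ => Real.sin (z * t)) (z * Real.cos (z * t)) t := by
    exact ((Real.hasDerivAt_sin (z * t)).comp t ((hasDerivAt_id t).const_mul z)).congr_deriv (by ring)
  exact h1.ofReal_comp.const_mul _

lemma Fm_deriv2 (ω z x₁ t : ℝ) :
    HasDerivAt (fun t : ℝ => Complex.exp (Complex.I * ω * x₁) * ((z * Real.cos (z * t) : ℝ) : ℂ))
      (-((z : ℂ) ^ 2) * Fm ω z x₁ t) t := by
  have h1 : HasDerivAt (fun t : ℝ => z * Real.cos (z * t)) (-(z ^ 2) * Real.sin (z * t)) t := by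
    have := ((Real.hasDerivAt_cos (z * t)).comp t ((hasDerivAt_id t).const_mul z)).const_mul z
    exact this.congr_deriv (by ring)
  have h2 := h1.ofReal_comp.const_mul (Complex.exp (Complex.I * ω * x₁))
  exact h2.congr_deriv (by
  simp only [Fm]
  push_cast
  ring)

lemma Gm_hasDerivAt (ω z a x₁ t : ℝ) :
    HasDerivAt (Gm ω z a x₁) (-(a : ℂ) * Gm ω z a x₁ t) t := by
  have h1 : HasDerivAt (fun w : ℂ => Complex.exp (-(a : ℂ) * (w - 1)))
      (Complex.exp (-(a : ℂ) * ((t : ℂ) - 1)) * (-(a : ℂ))) (t : ℂ) := by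
    simpa using (((hasDerivAt_id ((t : ℝ) : ℂ)).sub_const 1).const_mul (-(a : ℂ))).cexp
  have h2 := (h1.comp_ofReal).const_mul
    (Complex.exp (Complex.I * ω * x₁) * ((Real.sin z : ℝ) : ℂ))
  exact h2.congr_deriv (by
  simp only [Gm]
  ring)

lemma exp_deriv2 (ω : ℝ) (C : ℂ) (x : ℝ) :
    deriv (deriv (fun y : ℝ => Complex.exp (Complex.I * ω * y) * C)) x
      = -((ω : ℂ) ^ 2) * (Complex.exp (Complex.I * ω * x) * C) := by
  have h1 : ∀ (D : ℂ) (y : ℝ), HasDerivAt (fun y : ℝ => Complex.exp (Complex.I * ω * y) * D)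
      (Complex.exp (Complex.I * ω * y) * (Complex.I * ω) * D) y := by
    intro D y
    have h : HasDerivAt (fun w : ℂ => Complex.exp (Complex.I * ω * w))
        (Complex.exp (Complex.I * ω * y) * (Complex.I * ω)) ((y : ℝ) : ℂ) := by
      simpa using ((hasDerivAt_id ((y : ℝ) : ℂ)).const_mul (Complex.I * ω)).cexp
    exact h.comp_ofReal.mul_const D
  have hd1 : deriv (fun y : ℝ => Complex.exp (Complex.I * ω * y) * C)
      = fun y : ℝ => Complex.exp (Complex.I * ω * y) * (Complex.I * ω * C) := by
    funext y
    rw [(h1 C y).deriv]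
    ring
  rw [hd1, (h1 (Complex.I * ω * C) x).deriv]
  linear_combination Complex.exp (Complex.I * ω * x) * (ω : ℂ) ^ 2 * C * Complex.I_sq

/-- With `z = √(nk² - ω²)` satisfying the dispersion relation
`√(ω² - k²) sin z + z cos z = 0`, the mode
`φ(x₁,x₂) = e^{iωx₁} sin(zx₂)` for `x₂ ≤ 1`,
`φ(x₁,x₂) = e^{iωx₁} sin(z) e^{-√(ω²-k²)(x₂-1)}` for `x₂ > 1`,
is `C¹` across `x₂ = 1` (φ and ∂₂φ continuous there), vanishes at `x₂ = 0`,
and satisfies `Δφ + k²nφ = 0` for `0 < x₂ < 1` and `Δφ + k²φ = 0` for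
`x₂ > 1`. -/
theorem guided_mode_properties (k ω n : ℝ) (hk : 0 < k) (hω : k < ω)
    (hn : 1 < n) (hnk : ω ^ 2 < n * k ^ 2)
    (z : ℝ) (hz : z = Real.sqrt (n * k ^ 2 - ω ^ 2))
    (hdisp : Real.sqrt (ω ^ 2 - k ^ 2) * Real.sin z + z * Real.cos z = 0)
    (φ : ℝ → ℝ → ℂ)
    (hφ : ∀ x₁ x₂ : ℝ, φ x₁ x₂ =
      if x₂ ≤ 1 then Complex.exp (Complex.I * ω * x₁) * ((Real.sin (z * x₂) : ℝ) : ℂ)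
      else Complex.exp (Complex.I * ω * x₁) * ((Real.sin z : ℝ) : ℂ) *
        Complex.exp (-(Real.sqrt (ω ^ 2 - k ^ 2) : ℂ) * ((x₂ : ℂ) - 1))) :
    (∀ x₁ : ℝ, ContinuousAt (fun x₂ => φ x₁ x₂) 1) ∧
    (∀ x₁ : ℝ, ContinuousAt (deriv (fun x₂ => φ x₁ x₂)) 1) ∧
    (∀ x₁ : ℝ, φ x₁ 0 = 0) ∧
    (∀ x₁ x₂ : ℝ, 0 < x₂ → x₂ < 1 →
      deriv (deriv (fun y => φ y x₂)) x₁ + deriv (deriv (fun y => φ x₁ y)) x₂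
        + (k ^ 2 * n : ℂ) * φ x₁ x₂ = 0) ∧
    (∀ x₁ x₂ : ℝ, 1 < x₂ →
      deriv (deriv (fun y => φ y x₂)) x₁ + deriv (deriv (fun y => φ x₁ y)) x₂
        + (k ^ 2 : ℂ) * φ x₁ x₂ = 0) := by
  set a : ℝ := Real.sqrt (ω ^ 2 - k ^ 2) with ha_def
  have hk2 : (0:ℝ) ≤ ω ^ 2 - k ^ 2 := by nlinarith
  have ha2 : a ^ 2 = ω ^ 2 - k ^ 2 := Real.sq_sqrt hk2
  have hzsq : z ^ 2 = n * k ^ 2 - ω ^ 2 := by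
    rw [hz]; exact Real.sq_sqrt (by nlinarith)
  have hrel : z * Real.cos z = -(a * Real.sin z) := by linarith
  have hrelC : ((z * Real.cos z : ℝ) : ℂ) = -((a : ℂ) * ((Real.sin z : ℝ) : ℂ)) := by
    rw [hrel]; push_cast; ring
  have hzC : (z : ℂ) ^ 2 = (n : ℂ) * (k : ℂ) ^ 2 - (ω : ℂ) ^ 2 := by
    have := congrArg (fun r : ℝ => (r : ℂ)) hzsq
    push_cast at this
    exact this
  have haC : (a : ℂ) ^ 2 = (ω : ℂ) ^ 2 - (k : ℂ) ^ 2 := by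
    have := congrArg (fun r : ℝ => (r : ℂ)) ha2
    push_cast at this
    exact this
  -- equalities with the two branches
  have hEqIic : ∀ x₁ : ℝ, Set.EqOn (fun s => φ x₁ s) (Fm ω z x₁) (Set.Iic 1) := by
    intro x₁ t ht
    show φ x₁ t = Fm ω z x₁ t
    rw [hφ, if_pos (Set.mem_Iic.mp ht)]; rfl
  have hG1 : ∀ x₁ : ℝ, Gm ω z a x₁ 1 =
      Complex.exp (Complex.I * ω * x₁) * ((Real.sin z : ℝ) : ℂ) := by
    intro x₁; simp [Gm]
  have hEqIci : ∀ x₁ : ℝ, Set.EqOn (fun s => φ x₁ s) (Gm ω z a x₁) (Set.Ici 1) := by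
    intro x₁ t ht
    show φ x₁ t = Gm ω z a x₁ t
    rcases eq_or_lt_of_le (Set.mem_Ici.mp ht) with h | h
    · rw [← h, hφ, if_pos le_rfl, hG1, mul_one]
    · rw [hφ, if_neg (not_le.mpr h)]; rfl
  have hFc : ∀ x₁ : ℝ, Continuous (Fm ω z x₁) := by
    intro x₁; unfold Fm; fun_prop
  have hGc : ∀ x₁ : ℝ, Continuous (Gm ω z a x₁) := by
    intro x₁; unfold Gm; fun_prop
  have hevF : ∀ (x₁ t : ℝ), t < 1 → (fun s => φ x₁ s) =ᶠ[nhds t] Fm ω z x₁ := by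
    intro x₁ t ht
    exact Filter.eventuallyEq_of_mem (Iio_mem_nhds ht) (fun s hs => hEqIic x₁ (Set.mem_Iic.mpr (le_of_lt hs)))
  have hevG : ∀ (x₁ t : ℝ), 1 < t → (fun s => φ x₁ s) =ᶠ[nhds t] Gm ω z a x₁ := by
    intro x₁ t ht
    exact Filter.eventuallyEq_of_mem (Ioi_mem_nhds ht) (fun s hs => hEqIci x₁ (Set.mem_Ici.mpr (le_of_lt hs)))
  -- matching of derivative values at 1
  have hval : ∀ x₁ : ℝ, -(a : ℂ) * Gm ω z a x₁ 1 =
      Complex.exp (Complex.I * ω * x₁) * ((z * Real.cos (z * 1) : ℝ) : ℂ) := by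
    intro x₁
    rw [hG1, mul_one]
    linear_combination (-(Complex.exp (Complex.I * ω * x₁))) * hrelC
  -- derivative at the interface
  have hD1 : ∀ x₁ : ℝ, HasDerivAt (fun s => φ x₁ s)
      (Complex.exp (Complex.I * ω * x₁) * ((z * Real.cos (z * 1) : ℝ) : ℂ)) 1 := by
    intro x₁
    have hl := ((Fm_hasDerivAt ω z x₁ 1).hasDerivWithinAt (s := Set.Iic 1)).congr
      (hEqIic x₁) (hEqIic x₁ self_mem_Iic)
    have hr := ((Gm_hasDerivAt ω z a x₁ 1).hasDerivWithinAt (s := Set.Ici 1)).congr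
      (hEqIci x₁) (hEqIci x₁ self_mem_Ici)
    rw [hval x₁] at hr
    have := hl.union hr
    rwa [Set.Iic_union_Ici, hasDerivWithinAt_univ] at this
  -- full formula for the x₂-derivative
  have hDeriv : ∀ x₁ : ℝ, deriv (fun s => φ x₁ s) = fun t =>
      if t ≤ 1 then Complex.exp (Complex.I * ω * x₁) * ((z * Real.cos (z * t) : ℝ) : ℂ)
      else -(a : ℂ) * Gm ω z a x₁ t := by
    intro x₁
    funext t
    rcases lt_trichotomy t 1 with h | h | h
    · rw [if_pos h.le, (hevF x₁ t h).deriv_eq, (Fm_hasDerivAt ω z x₁ t).deriv]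
    · rw [h, if_pos le_rfl, (hD1 x₁).deriv]
    · rw [if_neg (not_le.mpr h), (hevG x₁ t h).deriv_eq, (Gm_hasDerivAt ω z a x₁ t).deriv]
  refine ⟨?_, ?_, ?_, ?_, ?_⟩
  · -- continuity of φ at x₂ = 1
    intro x₁
    have h1 : ContinuousWithinAt (fun s => φ x₁ s) (Set.Iic 1) 1 :=
      ((hFc x₁).continuousWithinAt).congr (hEqIic x₁) (hEqIic x₁ self_mem_Iic)
    have h2 : ContinuousWithinAt (fun s => φ x₁ s) (Set.Ici 1) 1 :=
      ((hGc x₁).continuousWithinAt).congr (hEqIci x₁) (hEqIci x₁ self_mem_Ici)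
    have := h1.union h2
    rwa [Set.Iic_union_Ici, continuousWithinAt_univ] at this
  · -- continuity of ∂₂φ at x₂ = 1
    intro x₁
    rw [hDeriv x₁]
    have hcont1 : Continuous (fun t : ℝ =>
        Complex.exp (Complex.I * ω * x₁) * ((z * Real.cos (z * t) : ℝ) : ℂ)) := by fun_prop
    have hcont2 : Continuous (fun t : ℝ => -(a : ℂ) * Gm ω z a x₁ t) :=
      continuous_const.mul (hGc x₁)
    have h1 : ContinuousWithinAt (fun t : ℝ =>
        if t ≤ 1 then Complex.exp (Complex.I * ω * x₁) * ((z * Real.cos (z * t) : ℝ) : ℂ)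
        else -(a : ℂ) * Gm ω z a x₁ t) (Set.Iic 1) 1 :=
      (hcont1.continuousWithinAt).congr (fun t ht => if_pos ht) (if_pos le_rfl)
    have h2 : ContinuousWithinAt (fun t : ℝ =>
        if t ≤ 1 then Complex.exp (Complex.I * ω * x₁) * ((z * Real.cos (z * t) : ℝ) : ℂ)
        else -(a : ℂ) * Gm ω z a x₁ t) (Set.Ici 1) 1 := by
      refine (hcont2.continuousWithinAt).congr (fun t ht => ?_) ?_
      · rcases eq_or_lt_of_le (Set.mem_Ici.mp ht) with h | h
        · rw [← h, if_pos le_rfl, hval x₁]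
        · rw [if_neg (not_le.mpr h)]
      · rw [if_pos le_rfl, hval x₁]
    have := h1.union h2
    rwa [Set.Iic_union_Ici, continuousWithinAt_univ] at this
  · -- vanishing at x₂ = 0
    intro x₁
    rw [hφ, if_pos (by norm_num : (0:ℝ) ≤ 1)]
    simp
  · -- Helmholtz equation in the slab 0 < x₂ < 1
    intro x₁ x₂ hx0 hx1
    have hfun : (fun y => φ y x₂) =
        fun y : ℝ => Complex.exp (Complex.I * ω * y) * ((Real.sin (z * x₂) : ℝ) : ℂ) := by
      funext y; rw [hφ, if_pos hx1.le]
    have hx1dir : deriv (deriv (fun y => φ y x₂)) x₁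
        = -((ω : ℂ) ^ 2) * φ x₁ x₂ := by
      rw [hfun, exp_deriv2, hφ x₁ x₂, if_pos hx1.le]
    have hev2 : deriv (fun s => φ x₁ s) =ᶠ[nhds x₂] deriv (Fm ω z x₁) := by
      filter_upwards [Iio_mem_nhds hx1] with t ht
      exact (hevF x₁ t ht).deriv_eq
    have hx2dir : deriv (deriv (fun y => φ x₁ y)) x₂
        = -((z : ℂ) ^ 2) * Fm ω z x₁ x₂ := by
      rw [hev2.deriv_eq]
      have hdF : deriv (Fm ω z x₁) = fun t =>
          Complex.exp (Complex.I * ω * x₁) * ((z * Real.cos (z * t) : ℝ) : ℂ) :=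
        funext fun t => (Fm_hasDerivAt ω z x₁ t).deriv
      rw [hdF, (Fm_deriv2 ω z x₁ x₂).deriv]
    rw [hx1dir, hx2dir, hφ x₁ x₂, if_pos hx1.le]
    have hFmr : Fm ω z x₁ x₂ =
        Complex.exp (Complex.I * ω * x₁) * ((Real.sin (z * x₂) : ℝ) : ℂ) := rfl
    rw [hFmr]
    linear_combination (-(Complex.exp (Complex.I * ω * x₁) * ((Real.sin (z * x₂) : ℝ) : ℂ))) * hzC
  · -- Helmholtz equation above the slab
    intro x₁ x₂ hx1
    have hfun : (fun y => φ y x₂) =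
        fun y : ℝ => Complex.exp (Complex.I * ω * y) *
          (((Real.sin z : ℝ) : ℂ) * Complex.exp (-(a : ℂ) * ((x₂ : ℂ) - 1))) := by
      funext y; rw [hφ, if_neg (not_le.mpr hx1)]; ring
    have hx1dir : deriv (deriv (fun y => φ y x₂)) x₁
        = -((ω : ℂ) ^ 2) * φ x₁ x₂ := by
      rw [hfun, exp_deriv2, hφ x₁ x₂, if_neg (not_le.mpr hx1)]
      ring
    have hev2 : deriv (fun s => φ x₁ s) =ᶠ[nhds x₂] deriv (Gm ω z a x₁) := by
      filter_upwards [Ioi_mem_nhds hx1] with t ht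
      exact (hevG x₁ t ht).deriv_eq
    have hx2dir : deriv (deriv (fun y => φ x₁ y)) x₂
        = (a : ℂ) ^ 2 * Gm ω z a x₁ x₂ := by
      rw [hev2.deriv_eq]
      have hdG : deriv (Gm ω z a x₁) = fun t => -(a : ℂ) * Gm ω z a x₁ t :=
        funext fun t => (Gm_hasDerivAt ω z a x₁ t).deriv
      rw [hdG, ((Gm_hasDerivAt ω z a x₁ x₂).const_mul (-(a : ℂ))).deriv]
      ring
    rw [hx1dir, hx2dir, hφ x₁ x₂, if_neg (not_le.mpr hx1)]
    have hGmr : Gm ω z a x₁ x₂ =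
        Complex.exp (Complex.I * ω * x₁) * ((Real.sin z : ℝ) : ℂ) *
          Complex.exp (-(a : ℂ) * ((x₂ : ℂ) - 1)) := rfl
    rw [hGmr]
    linear_combination (Complex.exp (Complex.I * ω * x₁) * ((Real.sin z : ℝ) : ℂ) *
      Complex.exp (-(a : ℂ) * ((x₂ : ℂ) - 1))) * haC
end
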